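/- Let S ∈ ℝ^{K×K} be irreducible with nonnegative entries, let 0 < τ < ρ(S), and let (v,w) be an entrywise positive solution of the Dyson equation with ⟨v⟩ = ⟨w⟩; assume moreover that every entrywise positive solution (v′,w′) of the Dyson equation at the same τ is of the form (α v, α⁻¹ w) for some α > 0. Then: (i) v lies in the domain D_τ := {x ∈ ℝ^K : 0 < x and τ x < Sᵗx entrywise} of the functional J; (ii) J(v) = inf{J(x) : x ∈ D_τ}; and (iii) every sequence x⁽ⁿ⁾ ∈ D_τ with ⟨x⁽ⁿ⁾⟩ = ⟨v⟩ for all n and J(x⁽ⁿ⁾) → inf_{D_τ} J converges to v. -/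

import Mathlib

open Matrix Filter Topology

/-- The normalized average `⟨x⟩ = (1/K) ∑ i, x i` of a vector. -/
noncomputable def avg {K : ℕ} (x : Fin K → ℝ) : ℝ := (∑ i, x i) / K

/-- The Dyson equation (at `η = 0`) with parameter `τ > 0` for an entrywise positive pair
`(v, w)` with `Sw`, `Sᵗv` entrywise positive: `1/v = Sw + τ/(Sᵗv)`, `1/w = Sᵗv + τ/(Sw)`. -/
def DysonSol {K : ℕ} (S : Matrix (Fin K) (Fin K) ℝ) (τ : ℝ) (v w : Fin K → ℝ) : Prop :=
  (∀ i, 0 < v i) ∧ (∀ i, 0 < w i) ∧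
  (∀ i, 0 < S.mulVec w i) ∧ (∀ i, 0 < Sᵀ.mulVec v i) ∧
  (∀ i, 1 / v i = S.mulVec w i + τ / Sᵀ.mulVec v i) ∧
  (∀ i, 1 / w i = Sᵀ.mulVec v i + τ / S.mulVec w i)

/-- The domain `D_τ = {x : 0 < x, τ x < Sᵗx entrywise}` of the functional `J`. -/
def Dtau {K : ℕ} (S : Matrix (Fin K) (Fin K) ℝ) (τ : ℝ) : Set (Fin K → ℝ) :=
  {x | (∀ i, 0 < x i) ∧ ∀ i, τ * x i < Sᵀ.mulVec x i}

/-- The functional `J(x) = ⟨τ x/(Sᵗx)⟩ − ⟨log(τ x/(Sᵗx))⟩`. -/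
noncomputable def Jfun {K : ℕ} (S : Matrix (Fin K) (Fin K) ℝ) (τ : ℝ) (x : Fin K → ℝ) : ℝ :=
  avg (fun i => τ * x i / Sᵀ.mulVec x i) - avg (fun i => Real.log (τ * x i / Sᵀ.mulVec x i))

variable {K : ℕ}
lemma exists_pos_of_sum_pos {f : Fin K → ℝ} (h : 0 < ∑ i, f i) : ∃ i, 0 < f i := by
  by_contra hc
  push_neg at hc
  exact absurd (Finset.sum_nonpos (fun i _ => hc i)) (not_le.mpr h)

lemma pow_entry_nonneg {A : Matrix (Fin K) (Fin K) ℝ} (hA : ∀ i j, 0 ≤ A i j) (m : ℕ) :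
    ∀ i j, 0 ≤ (A ^ m) i j := by
  induction m with
  | zero => intro i j; simp [Matrix.one_apply]; split <;> norm_num
  | succ n ih =>
    intro i j
    rw [pow_succ, Matrix.mul_apply]
    exact Finset.sum_nonneg fun k _ => mul_nonneg (ih i k) (hA k j)
lemma pow_pattern {A B : Matrix (Fin K) (Fin K) ℝ} (hA : ∀ i j, 0 ≤ A i j)
    (hB : ∀ i j, 0 ≤ B i j) (h : ∀ i j, 0 < A i j → 0 < B i j) (m : ℕ) :
    ∀ i j, 0 < (A ^ m) i j → 0 < (B ^ m) i j := by
  induction m with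
  | zero => intro i j; simp
  | succ n ih =>
    intro i j hpos
    rw [pow_succ, Matrix.mul_apply] at hpos
    obtain ⟨k, hk⟩ := exists_pos_of_sum_pos hpos
    have h1 : 0 < (A ^ n) i k := by
      rcases lt_or_ge 0 ((A ^ n) i k) with h' | h'
      · exact h'
      · exact absurd hk (not_lt.mpr (mul_nonpos_of_nonpos_of_nonneg h' (hA k j)))
    have h2 : 0 < A k j := by
      by_contra hc
      have : A k j = 0 := le_antisymm (not_lt.mp hc) (hA k j)
      simp [this] at hk
    rw [pow_succ, Matrix.mul_apply]
    have : 0 < (B ^ n) i k * B k j := mul_pos (ih i k h1) (h k j h2)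
    refine lt_of_lt_of_le this (Finset.single_le_sum (fun l _ => mul_nonneg (pow_entry_nonneg hB n i l) (hB l j)) (Finset.mem_univ k))

lemma boundary_edge {S : Matrix (Fin K) (Fin K) ℝ} (hS : ∀ i j, 0 ≤ S i j)
    (P : Fin K → Prop) :
    ∀ (m : ℕ) (j i : Fin K), 0 < (S ^ m) j i → P j → ¬ P i →
      ∃ p q, P p ∧ ¬ P q ∧ 0 < S p q := by
  intro m
  induction m with
  | zero =>
    intro j i h hj hi
    simp [Matrix.one_apply] at h
    rcases eq_or_ne j i with rfl | hne
    · exact absurd hj hi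
    · simp [hne] at h
  | succ n ih =>
    intro j i h hj hi
    rw [pow_succ, Matrix.mul_apply] at h
    obtain ⟨k, hk⟩ := exists_pos_of_sum_pos h
    have h1 : 0 < (S ^ n) j k := by
      rcases lt_or_ge 0 ((S ^ n) j k) with h' | h'
      · exact h'
      · exact absurd hk (not_lt.mpr (mul_nonpos_of_nonpos_of_nonneg h' (hS k i)))
    have h2 : 0 < S k i := by
      by_contra hc
      have : S k i = 0 := le_antisymm (not_lt.mp hc) (hS k i)
      simp [this] at hk
    by_cases hPk : P k
    · exact ⟨k, i, hPk, hi, h2⟩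
    · exact ih j k h1 hj hPk
lemma col_pos {S : Matrix (Fin K) (Fin K) ℝ} (hS : ∀ i j, 0 ≤ S i j)
    (hirr : ∀ i j, ∃ m : ℕ, 1 ≤ m ∧ 0 < (S ^ m) i j) (i : Fin K) :
    ∃ k, 0 < S k i := by
  obtain ⟨m, hm1, hm⟩ := hirr i i
  obtain ⟨n, rfl⟩ := Nat.exists_eq_add_of_le hm1
  rw [add_comm, pow_succ, Matrix.mul_apply] at hm
  obtain ⟨k, hk⟩ := exists_pos_of_sum_pos hm
  refine ⟨k, ?_⟩
  by_contra hc
  have : S k i = 0 := le_antisymm (not_lt.mp hc) (hS k i)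
  simp [this] at hk

lemma mulVecT_pos {S : Matrix (Fin K) (Fin K) ℝ} (hS : ∀ i j, 0 ≤ S i j)
    (hcol : ∀ i, ∃ k, 0 < S k i) {x : Fin K → ℝ} (hx : ∀ i, 0 < x i) (i : Fin K) :
    0 < Sᵀ.mulVec x i := by
  obtain ⟨k, hk⟩ := hcol i
  rw [Matrix.mulVec, dotProduct]
  exact Finset.sum_pos' (fun j _ => mul_nonneg (hS j i) (hx j).le)
    ⟨k, Finset.mem_univ k, mul_pos hk (hx k)⟩

lemma no_sub_eigen {S : Matrix (Fin K) (Fin K) ℝ} (hS : ∀ i j, 0 ≤ S i j)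
    {ρ τ : ℝ} {s : Fin K → ℝ} (hs : ∀ i, 0 < s i) (hseig : Sᵀ.mulVec s = ρ • s)
    (hτρ : τ < ρ) (hK : 1 ≤ K) {x : Fin K → ℝ} (hx : ∀ i, 0 < x i)
    (hle : ∀ i, Sᵀ.mulVec x i ≤ τ * x i) : False := by
  have hne : (Finset.univ : Finset (Fin K)).Nonempty := by
    rw [Finset.univ_nonempty_iff]
    exact Fin.pos_iff_nonempty.mp hK
  obtain ⟨k, _, hk⟩ := Finset.exists_min_image Finset.univ (fun i => x i / s i) hne
  set c := x k / s k with hc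
  have hcs : ∀ j, c * s j ≤ x j := by
    intro j
    have := hk j (Finset.mem_univ j)
    calc c * s j ≤ (x j / s j) * s j := by
          exact mul_le_mul_of_nonneg_right this (hs j).le
      _ = x j := div_mul_cancel₀ _ (hs j).ne'
  have h1 : ρ * x k ≤ Sᵀ.mulVec x k := by
    have : c * (Sᵀ.mulVec s k) ≤ Sᵀ.mulVec x k := by
      rw [Matrix.mulVec, Matrix.mulVec, dotProduct, dotProduct, Finset.mul_sum]
      refine Finset.sum_le_sum fun j _ => ?_
      calc c * (Sᵀ k j * s j) = Sᵀ k j * (c * s j) := by ring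
        _ ≤ Sᵀ k j * x j := mul_le_mul_of_nonneg_left (hcs j) (hS j k)
    rw [hseig] at this
    have hck : c * s k = x k := div_mul_cancel₀ _ (hs k).ne'
    calc ρ * x k = c * (ρ * s k) := by rw [← hck]; ring
      _ ≤ Sᵀ.mulVec x k := by simpa using this
  have h2 : Sᵀ.mulVec x k ≤ τ * x k := hle k
  have : ρ * x k ≤ τ * x k := le_trans h1 h2
  have : ρ ≤ τ := le_of_mul_le_mul_right (by linarith [this]) (hx k)
  linarith
lemma mulVec_apply' {M : Matrix (Fin K) (Fin K) ℝ} (v : Fin K → ℝ) (k : Fin K) :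
    M.mulVec v k = ∑ l, M k l * v l := by
  simp [Matrix.mulVec, dotProduct]

lemma fixed_pos {M : Matrix (Fin K) (Fin K) ℝ} (hM : ∀ i j, 0 ≤ M i j)
    (hirrM : ∀ i j, ∃ m : ℕ, 1 ≤ m ∧ 0 < (M ^ m) i j)
    {p : Fin K → ℝ} (hp0 : ∀ i, 0 ≤ p i) (hfix : M.mulVec p = p)
    {j : Fin K} (hj : 0 < p j) (i : Fin K) : 0 < p i := by
  have hpow : ∀ m : ℕ, (M ^ m).mulVec p = p := by
    intro m
    induction m with
    | zero => simp [Matrix.one_mulVec]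
    | succ n ih => rw [pow_succ', ← Matrix.mulVec_mulVec, ih, hfix]
  obtain ⟨m, _, hm⟩ := hirrM i j
  have hmi : (M ^ m).mulVec p i = p i := congrFun (hpow m) i
  rw [← hmi, mulVec_apply']
  refine Finset.sum_pos' (fun l _ => mul_nonneg (pow_entry_nonneg hM m i l) (hp0 l))
    ⟨j, Finset.mem_univ j, mul_pos hm hj⟩

lemma eig_sign {M : Matrix (Fin K) (Fin K) ℝ} (hM : ∀ i j, 0 ≤ M i j)
    (hirrM : ∀ i j, ∃ m : ℕ, 1 ≤ m ∧ 0 < (M ^ m) i j)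
    (hcol : ∀ i, ∑ k, M k i = 1) {r : Fin K → ℝ} (hr : M.mulVec r = r) :
    (∀ i, r i = 0) ∨ (∀ i, 0 < r i) ∨ (∀ i, r i < 0) := by
  set rp : Fin K → ℝ := fun i => max (r i) 0 with hrp
  set rm : Fin K → ℝ := fun i => max (-r i) 0 with hrm
  have hsub : ∀ i, rp i - rm i = r i := by
    intro i; simp only [hrp, hrm]
    rcases le_total (r i) 0 with h | h
    · rw [max_eq_right h, max_eq_left (by linarith)]; ring
    · rw [max_eq_left h, max_eq_right (by linarith)]; ring
  have hrp0 : ∀ i, 0 ≤ rp i := fun i => le_max_right _ _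
  have hrm0 : ∀ i, 0 ≤ rm i := fun i => le_max_right _ _
  have hMrp0 : ∀ k, 0 ≤ M.mulVec rp k := by
    intro k; rw [mulVec_apply']
    exact Finset.sum_nonneg fun l _ => mul_nonneg (hM k l) (hrp0 l)
  have hMrm0 : ∀ k, 0 ≤ M.mulVec rm k := by
    intro k; rw [mulVec_apply']
    exact Finset.sum_nonneg fun l _ => mul_nonneg (hM k l) (hrm0 l)
  have hsplit : ∀ k, M.mulVec rp k - M.mulVec rm k = r k := by
    intro k
    have h1 : M.mulVec (rp - rm) = M.mulVec rp - M.mulVec rm := Matrix.mulVec_sub _ _ _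
    have h2 : rp - rm = r := funext hsub
    rw [h2, hr] at h1
    have := congrFun h1 k
    simp at this
    linarith [this]
  have hle : ∀ k, rp k ≤ M.mulVec rp k := by
    intro k
    rcases le_total (r k) 0 with h | h
    · simp only [hrp, max_eq_right h]; exact hMrp0 k
    · simp only [hrp, max_eq_left h]
      have := hsplit k
      nlinarith [hMrm0 k]
  have hsum : ∑ k, M.mulVec rp k = ∑ k, rp k := by
    simp only [mulVec_apply']
    rw [Finset.sum_comm]
    have h2 : ∀ i : Fin K, ∑ k, M k i * rp i = rp i := by
      intro i; rw [← Finset.sum_mul, hcol i, one_mul]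
    simp only [h2]
  have heq : ∀ k, M.mulVec rp k = rp k := by
    have hz : ∑ k, (M.mulVec rp k - rp k) = 0 := by
      rw [Finset.sum_sub_distrib, hsum, sub_self]
    intro k
    have := (Finset.sum_eq_zero_iff_of_nonneg (fun l (_ : l ∈ Finset.univ) =>
      sub_nonneg.mpr (hle l))).mp hz k (Finset.mem_univ k)
    linarith
  have heqm : ∀ k, M.mulVec rm k = rm k := by
    intro k
    have := hsplit k
    have h2 := heq k
    have h3 := hsub k
    linarith
  by_cases hp : ∃ j, 0 < rp j
  · obtain ⟨j, hj⟩ := hp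
    have hpos := fixed_pos hM hirrM hrp0 (funext heq) hj
    right; left
    intro i
    have h4 := hpos i
    simp only [hrp, lt_max_iff] at h4
    rcases h4 with h | h
    · exact h
    · linarith
  · push_neg at hp
    have hrpz : ∀ i, rp i = 0 := fun i => le_antisymm (hp i) (hrp0 i)
    have hrle : ∀ i, r i ≤ 0 := by
      intro i
      have := hrpz i
      simp only [hrp, max_eq_iff] at this
      rcases this with ⟨h, _⟩ | ⟨_, h⟩
      · exact le_of_eq h
      · exact h
    by_cases hq : ∃ j, 0 < rm j
    · obtain ⟨j, hj⟩ := hq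
      have hpos := fixed_pos hM hirrM hrm0 (funext heqm) hj
      right; right
      intro i
      have h4 := hpos i
      simp only [hrm, lt_max_iff] at h4
      rcases h4 with h | h
      · linarith
      · linarith
    · push_neg at hq
      left
      intro i
      have h1 := le_antisymm (hq i) (hrm0 i)
      have h2 := hsub i
      have h3 := hrpz i
      linarith
lemma EL_of_localmin {S : Matrix (Fin K) (Fin K) ℝ} {τ : ℝ} (hτ0 : 0 < τ) (hK : 1 ≤ K)
    {x : Fin K → ℝ} (hx : ∀ i, 0 < x i) (hb : ∀ i, 0 < Sᵀ.mulVec x i)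
    (hmin : IsLocalMin (Jfun S τ) x) (k : Fin K) :
    ((Sᵀ.mulVec x k - τ * x k) / Sᵀ.mulVec x k) / x k
      = ∑ i, S k i * (((Sᵀ.mulVec x i - τ * x i) / Sᵀ.mulVec x i) / Sᵀ.mulVec x i) := by
  classical
  set b : Fin K → ℝ := Sᵀ.mulVec x with hbdef
  set δ : Fin K → ℝ := Pi.single k 1 with hδdef
  set γ : ℝ → (Fin K → ℝ) := fun ε => x + ε • (Pi.single k 1 : Fin K → ℝ) with hγdef
  set f : Fin K → ℝ → ℝ := fun i ε => τ * (x i + ε * δ i) / (b i + ε * S k i) with hfdef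
  set d : Fin K → ℝ := fun i => (τ * δ i * b i - τ * x i * S k i) / (b i) ^ 2 with hddef
  have hγmv : ∀ ε i, Sᵀ.mulVec (γ ε) i = b i + ε * S k i := by
    intro ε i
    rw [hγdef]
    simp only [Matrix.mulVec_add, Matrix.mulVec_smul, Matrix.mulVec_single]
    simp [hbdef, Matrix.transpose_apply, smul_eq_mul]
  have hJγ : ∀ ε, Jfun S τ (γ ε) = (∑ i, f i ε) / (K : ℝ)
      - (∑ i, Real.log (f i ε)) / (K : ℝ) := by
    intro ε
    rw [Jfun, avg, avg]
    congr 1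
    · congr 1
      refine Finset.sum_congr rfl fun i _ => ?_
      rw [hγmv ε i]
      simp [hγdef, hfdef, hδdef]
    · congr 1
      refine Finset.sum_congr rfl fun i _ => ?_
      rw [hγmv ε i]
      simp [hγdef, hfdef, hδdef]
  -- derivatives
  have hf0 : ∀ i, f i 0 = τ * x i / b i := by intro i; simp [hfdef]
  have hf0pos : ∀ i, 0 < f i 0 := by
    intro i; rw [hf0]; exact div_pos (mul_pos hτ0 (hx i)) (hb i)
  have hdiv : ∀ i, HasDerivAt (fun ε => f i ε) (d i) 0 := by
    intro i
    have hnum : HasDerivAt (fun ε : ℝ => τ * (x i + ε * δ i)) (τ * δ i) 0 := by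
      have h1 : HasDerivAt (fun ε : ℝ => x i + ε * δ i) (δ i) 0 := by
        simpa using ((hasDerivAt_id (0:ℝ)).mul_const (δ i)).const_add (x i)
      simpa using h1.const_mul τ
    have hden : HasDerivAt (fun ε : ℝ => b i + ε * S k i) (S k i) 0 := by
      simpa using ((hasDerivAt_id (0:ℝ)).mul_const (S k i)).const_add (b i)
    have hne : b i + 0 * S k i ≠ 0 := by simpa using (hb i).ne'
    have := hnum.div hden hne
    refine this.congr_deriv ?_
    rw [hddef]
    simp
  have hlog : ∀ i, HasDerivAt (fun ε => Real.log (f i ε)) (d i / (τ * x i / b i)) 0 := by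
    intro i
    have := (hdiv i).log (hf0pos i).ne'
    rwa [hf0 i] at this
  have hsum1 : HasDerivAt (fun ε => ∑ i, f i ε) (∑ i, d i) 0 :=
    HasDerivAt.fun_sum fun i _ => hdiv i
  have hsum2 : HasDerivAt (fun ε => ∑ i, Real.log (f i ε))
      (∑ i, d i / (τ * x i / b i)) 0 :=
    HasDerivAt.fun_sum fun i _ => hlog i
  have Hder : HasDerivAt (fun ε => Jfun S τ (γ ε))
      ((∑ i, d i) / (K : ℝ) - (∑ i, d i / (τ * x i / b i)) / (K : ℝ)) 0 := by
    have h := (hsum1.div_const (K : ℝ)).sub (hsum2.div_const (K : ℝ))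
    have heq : (fun ε => Jfun S τ (γ ε))
        = fun ε => (∑ i, f i ε) / (K : ℝ) - (∑ i, Real.log (f i ε)) / (K : ℝ) :=
      funext hJγ
    rw [heq]
    exact h
  -- local min transported
  have hγ0 : γ 0 = x := by simp [hγdef]
  have hγcont : Tendsto γ (𝓝 0) (𝓝 x) := by
    have : Continuous γ := by
      rw [hγdef]; exact continuous_const.add (continuous_id.smul continuous_const)
    simpa [hγ0] using this.tendsto 0
  have hloc : IsLocalMin (fun ε => Jfun S τ (γ ε)) 0 := by
    have hev := hγcont.eventually hmin
    filter_upwards [hev] with ε hε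
    simpa [hγ0] using hε
  have hD0 : (∑ i, d i) / (K : ℝ) - (∑ i, d i / (τ * x i / b i)) / (K : ℝ) = 0 := by
    rw [← Hder.deriv]
    exact hloc.deriv_eq_zero
  have hKne : (K : ℝ) ≠ 0 := by positivity
  have hAB : ∑ i, d i = ∑ i, d i / (τ * x i / b i) := by
    field_simp at hD0
    linarith [hD0]
  have hper : ∀ i, d i - d i / (τ * x i / b i)
      = S k i * (((b i - τ * x i) / b i) / b i) - δ i * (((b i - τ * x i) / b i) / x i) := by
    intro i
    have hbne := (hb i).ne'
    have hxne := (hx i).ne'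
    have hτne := hτ0.ne'
    rw [hddef]
    field_simp
    ring
  have hzero : ∑ i, (d i - d i / (τ * x i / b i)) = 0 := by
    rw [Finset.sum_sub_distrib, hAB, sub_self]
  rw [Finset.sum_congr rfl (fun i _ => hper i)] at hzero
  rw [Finset.sum_sub_distrib] at hzero
  have hsingle : ∑ i, δ i * (((b i - τ * x i) / b i) / x i)
      = ((b k - τ * x k) / b k) / x k := by
    rw [hδdef]
    simp [Pi.single_apply, Finset.sum_ite_eq']
  rw [hsingle] at hzero
  linarith [hzero]
lemma crit_scaled {S : Matrix (Fin K) (Fin K) ℝ} {τ ρ : ℝ} {s v w : Fin K → ℝ}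
    (hK : 1 ≤ K) (hS : ∀ i j, 0 ≤ S i j)
    (hirr : ∀ i j, ∃ m : ℕ, 1 ≤ m ∧ 0 < (S ^ m) i j)
    (hs : ∀ i, 0 < s i) (hseig : Sᵀ.mulVec s = ρ • s)
    (hτ0 : 0 < τ) (hτρ : τ < ρ)
    (huniq : ∀ v' w', DysonSol S τ v' w' → ∃ α : ℝ, 0 < α ∧ v' = α • v ∧ w' = α⁻¹ • w)
    {x : Fin K → ℝ} (hx : ∀ i, 0 < x i) (hb : ∀ i, 0 < Sᵀ.mulVec x i)
    (hEL : ∀ k, ((Sᵀ.mulVec x k - τ * x k) / Sᵀ.mulVec x k) / x k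
      = ∑ i, S k i * (((Sᵀ.mulVec x i - τ * x i) / Sᵀ.mulVec x i) / Sᵀ.mulVec x i)) :
    ∃ α : ℝ, 0 < α ∧ x = α • v := by
  classical
  set b : Fin K → ℝ := Sᵀ.mulVec x with hbdef
  set r : Fin K → ℝ := fun i => (b i - τ * x i) / b i with hrdef
  set M : Matrix (Fin K) (Fin K) ℝ := Matrix.of (fun k i => x k * S k i / b i) with hMdef
  have hMnn : ∀ k i, 0 ≤ M k i := fun k i =>
    div_nonneg (mul_nonneg (hx k).le (hS k i)) (hb i).le
  have hpat : ∀ k i, 0 < S k i → 0 < M k i := fun k i h =>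
    div_pos (mul_pos (hx k) h) (hb i)
  have hirrM : ∀ i j, ∃ m : ℕ, 1 ≤ m ∧ 0 < (M ^ m) i j := by
    intro i j
    obtain ⟨m, hm1, hm⟩ := hirr i j
    exact ⟨m, hm1, pow_pattern hS hMnn hpat m i j hm⟩
  have hbsum : ∀ i, b i = ∑ l, S l i * x l := by
    intro i
    rw [hbdef, mulVec_apply']
    exact Finset.sum_congr rfl fun l _ => by rw [Matrix.transpose_apply]
  have hcol : ∀ i, ∑ k, M k i = 1 := by
    intro i
    rw [hMdef]
    simp only [Matrix.of_apply]
    rw [← Finset.sum_div]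
    rw [div_eq_one_iff_eq (hb i).ne']
    rw [hbsum i]
    exact Finset.sum_congr rfl fun l _ => by ring
  have hfix : M.mulVec r = r := by
    funext k
    rw [mulVec_apply']
    have h := hEL k
    have hxk := (hx k).ne'
    have : ∑ l, M k l * r l = x k * ∑ i, S k i * (r i / b i) := by
      rw [Finset.mul_sum]
      exact Finset.sum_congr rfl fun l _ => by rw [hMdef]; simp only [Matrix.of_apply]; ring
    rw [this]
    have h2 : r k / x k = ∑ i, S k i * (r i / b i) := by
      rw [hrdef]
      simp only
      rw [h]
    rw [← h2]
    field_simp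
  rcases eig_sign hMnn hirrM hcol hfix with hz | hpos | hneg
  · exfalso
    refine no_sub_eigen hS hs hseig hτρ hK hx fun i => ?_
    have := hz i
    rw [hrdef] at this
    simp only at this
    have h2 : b i - τ * x i = 0 := by
      rcases div_eq_zero_iff.mp this with h | h
      · exact h
      · exact absurd h (hb i).ne'
    rw [hbdef] at *
    linarith
  swap
  · exfalso
    refine no_sub_eigen hS hs hseig hτρ hK hx fun i => ?_
    have := hneg i
    rw [hrdef] at this
    simp only at this
    have h2 : b i - τ * x i < 0 := by
      by_contra hc
      push_neg at hc
      exact absurd (div_nonneg hc (hb i).le) (not_le.mpr this)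
    rw [hbdef] at *
    linarith
  · -- r > 0 everywhere : build Dyson solution
    have hnum : ∀ i, 0 < b i - τ * x i := by
      intro i
      have := hpos i
      rw [hrdef] at this
      simp only at this
      by_contra hc
      push_neg at hc
      exact absurd this (not_lt.mpr (div_nonpos_of_nonpos_of_nonneg hc (hb i).le))
    set u : Fin K → ℝ := fun i => r i / b i with hudef
    have hu : ∀ i, 0 < u i := fun i => div_pos (hpos i) (hb i)
    have hSu : ∀ i, S.mulVec u i = r i / x i := by
      intro i
      rw [mulVec_apply']
      have h2 : r i / x i = ∑ l, S i l * (r l / b l) := by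
        rw [hrdef]; simp only; rw [hEL i]
      rw [h2]
  -- now the Dyson system
    have hdy : DysonSol S τ x u := by
      refine ⟨hx, hu, ?_, hb, ?_, ?_⟩
      · intro i; rw [hSu i]; exact div_pos (hpos i) (hx i)
      · intro i
        rw [hSu i, hrdef]
        simp only
        have hbne := (hb i).ne'
        have hxne := (hx i).ne'
        rw [hbdef] at hbne ⊢
        field_simp
        ring
      · intro i
        rw [hSu i, hudef, hrdef]
        simp only
        have hbne := (hb i).ne'
        have hxne := (hx i).ne'
        have hrne : b i - τ * x i ≠ 0 := (hnum i).ne'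
        rw [hbdef] at hbne hrne ⊢
        field_simp
        ring
    obtain ⟨α, hα, hxv, _⟩ := huniq x u hdy
    exact ⟨α, hα, hxv⟩
lemma v_mem_Dtau {S : Matrix (Fin K) (Fin K) ℝ} {τ : ℝ} {v w : Fin K → ℝ}
    (hvw : DysonSol S τ v w) : v ∈ Dtau S τ := by
  obtain ⟨hv, hw, hSw, hSv, heq1, _⟩ := hvw
  refine ⟨hv, fun i => ?_⟩
  have h := heq1 i
  have h1 : τ / Sᵀ.mulVec v i < 1 / v i := by
    have := hSw i
    linarith
  rw [div_lt_div_iff₀ (hSv i) (hv i)] at h1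
  nlinarith [h1]

lemma Jfun_sum {S : Matrix (Fin K) (Fin K) ℝ} {τ : ℝ} (x : Fin K → ℝ) :
    Jfun S τ x = (∑ i, (τ * x i / Sᵀ.mulVec x i
      - Real.log (τ * x i / Sᵀ.mulVec x i))) / K := by
  rw [Jfun, avg, avg, div_sub_div_same, Finset.sum_sub_distrib]

lemma term_ge_one {t : ℝ} (ht : 0 < t) : 1 ≤ t - Real.log t := by
  have := Real.log_le_sub_one_of_pos ht
  linarith

lemma Jfun_ge_one {S : Matrix (Fin K) (Fin K) ℝ} {τ : ℝ} (hτ0 : 0 < τ) (hK : 1 ≤ K)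
    {x : Fin K → ℝ} (hx : ∀ i, 0 < x i) (hb : ∀ i, 0 < Sᵀ.mulVec x i) :
    1 ≤ Jfun S τ x := by
  rw [Jfun_sum]
  rw [le_div_iff₀ (by positivity : (0:ℝ) < (K:ℝ))]
  calc 1 * (K:ℝ) = ∑ _i : Fin K, (1:ℝ) := by simp [mul_comm]
    _ ≤ _ := Finset.sum_le_sum fun i _ =>
        term_ge_one (div_pos (mul_pos hτ0 (hx i)) (hb i))

lemma Jfun_smul {S : Matrix (Fin K) (Fin K) ℝ} {τ : ℝ} {c : ℝ} (hc : c ≠ 0)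
    (x : Fin K → ℝ) : Jfun S τ (c • x) = Jfun S τ x := by
  have h : ∀ i, τ * (c • x) i / Sᵀ.mulVec (c • x) i = τ * x i / Sᵀ.mulVec x i := by
    intro i
    rw [Matrix.mulVec_smul]
    simp only [Pi.smul_apply, smul_eq_mul]
    rw [show τ * (c * x i) = c * (τ * x i) by ring]
    exact mul_div_mul_left _ _ hc
  rw [Jfun, Jfun, avg, avg, avg, avg]
  congr 1
  · congr 1; exact Finset.sum_congr rfl fun i _ => h i
  · congr 1; exact Finset.sum_congr rfl fun i _ => by rw [h i]

lemma avg_smul (c : ℝ) (x : Fin K → ℝ) : avg (c • x) = c * avg x := by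
  rw [avg, avg]
  simp only [Pi.smul_apply, smul_eq_mul]
  rw [← Finset.mul_sum, mul_div_assoc]

lemma avg_pos (hK : 1 ≤ K) {x : Fin K → ℝ} (hx : ∀ i, 0 < x i) : 0 < avg x := by
  rw [avg]
  have hne : (Finset.univ : Finset (Fin K)).Nonempty := by
    rw [Finset.univ_nonempty_iff]; exact Fin.pos_iff_nonempty.mp hK
  exact div_pos (Finset.sum_pos (fun i _ => hx i) hne) (by positivity)

lemma sum_eq_K_avg (x : Fin K → ℝ) (hK : 1 ≤ K) : ∑ i, x i = K * avg x := by
  rw [avg, mul_div_cancel₀]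
  positivity
lemma limit_point {S : Matrix (Fin K) (Fin K) ℝ} {τ : ℝ} (hτ0 : 0 < τ) (hK : 1 ≤ K)
    (hS : ∀ i j, 0 ≤ S i j) (hirr : ∀ i j, ∃ m : ℕ, 1 ≤ m ∧ 0 < (S ^ m) i j)
    {a m' : ℝ} (ha : 0 < a)
    {z : ℕ → Fin K → ℝ} (hz : ∀ n i, 0 < z n i) (hza : ∀ n, avg (z n) = a)
    (hJ : Tendsto (fun n => Jfun S τ (z n)) atTop (𝓝 m')) :
    ∃ (y : Fin K → ℝ) (φ : ℕ → ℕ), StrictMono φ ∧ Tendsto (z ∘ φ) atTop (𝓝 y) ∧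
      (∀ i, 0 < y i) ∧ Jfun S τ y = m' ∧ avg y = a := by
  classical
  have hKpos : (0:ℝ) < (K:ℝ) := by positivity
  have hcol := col_pos hS hirr
  -- bounded
  have hsum : ∀ n, ∑ i, z n i = K * a := by
    intro n; rw [sum_eq_K_avg (z n) hK, hza n]
  have hmem : ∀ n, z n ∈ Set.Icc (0 : Fin K → ℝ) (fun _ => K * a) := by
    intro n
    constructor
    · intro i; exact (hz n i).le
    · intro i
      calc z n i ≤ ∑ l, z n l :=
            Finset.single_le_sum (fun l _ => (hz n l).le) (Finset.mem_univ i)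
        _ = K * a := hsum n
  obtain ⟨y, hyIcc, φ, hφ, hconv⟩ := isCompact_Icc.tendsto_subseq hmem
  have hcoord : ∀ i, Tendsto (fun n => z (φ n) i) atTop (𝓝 (y i)) := by
    intro i
    exact tendsto_pi_nhds.mp hconv i
  have hy0 : ∀ i, 0 ≤ y i := fun i => hyIcc.1 i
  have hsumy : ∑ i, y i = K * a := by
    have h1 : Tendsto (fun n => ∑ i, z (φ n) i) atTop (𝓝 (∑ i, y i)) :=
      tendsto_finset_sum _ fun i _ => hcoord i
    have h2 : (fun n => ∑ i, z (φ n) i) = fun _ => K * a := funext fun n => hsum (φ n)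
    rw [h2] at h1
    exact (tendsto_nhds_unique h1 (tendsto_const_nhds : Tendsto (fun _ : ℕ => (K:ℝ) * a) atTop (𝓝 ((K:ℝ) * a)))).symm ▸ rfl
  have havgy : avg y = a := by
    rw [avg, hsumy]
    field_simp
  -- positivity of the limit
  have hypos : ∀ i, 0 < y i := by
    by_contra hc
    push_neg at hc
    obtain ⟨q, hq⟩ := hc
    have hyq : y q = 0 := le_antisymm hq (hy0 q)
    have hjex : ∃ j, 0 < y j := by
      by_contra hc2
      push_neg at hc2
      have : ∑ i, y i = 0 := Finset.sum_eq_zero fun i _ => le_antisymm (hc2 i) (hy0 i)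
      rw [hsumy] at this
      nlinarith
    obtain ⟨j, hj⟩ := hjex
    obtain ⟨m, _, hm⟩ := hirr j q
    obtain ⟨p, q', hp, hq', hSpq⟩ := boundary_edge hS (fun i => 0 < y i) m j q hm hj
      (by simpa [hyq] using lt_irrefl (0:ℝ))
    have hyq' : y q' = 0 := le_antisymm (not_lt.mp hq') (hy0 q')
    set g : ℕ → ℝ := fun n => τ * z (φ n) q' / Sᵀ.mulVec (z (φ n)) q' with hgdef
    have hbpos : ∀ n, 0 < Sᵀ.mulVec (z (φ n)) q' := fun n =>
      mulVecT_pos hS hcol (hz (φ n)) q'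
    have hgpos : ∀ n, 0 < g n := fun n =>
      div_pos (mul_pos hτ0 (hz (φ n) q')) (hbpos n)
    have hlb : ∀ n, S p q' * z (φ n) p ≤ Sᵀ.mulVec (z (φ n)) q' := by
      intro n
      rw [mulVec_apply']
      have : S p q' * z (φ n) p = Sᵀ q' p * z (φ n) p := by rw [Matrix.transpose_apply]
      rw [this]
      exact Finset.single_le_sum
        (fun l _ => mul_nonneg (hS l q') (hz (φ n) l).le) (Finset.mem_univ p)
    have hupper : ∀ n, g n ≤ τ * z (φ n) q' / (S p q' * z (φ n) p) := by
      intro n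
      exact div_le_div_of_nonneg_left (mul_pos hτ0 (hz (φ n) q')).le
        (mul_pos hSpq (hz (φ n) p)) (hlb n)
    have hup0 : Tendsto (fun n => τ * z (φ n) q' / (S p q' * z (φ n) p)) atTop (𝓝 0) := by
      have hnum : Tendsto (fun n => τ * z (φ n) q') atTop (𝓝 (τ * y q')) :=
        (hcoord q').const_mul τ
      have hden : Tendsto (fun n => S p q' * z (φ n) p) atTop (𝓝 (S p q' * y p)) :=
        (hcoord p).const_mul (S p q')
      have hdenne : S p q' * y p ≠ 0 := (mul_pos hSpq hp).ne'
      have := hnum.div hden hdenne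
      rw [hyq', mul_zero, zero_div] at this
      exact this
    have hg0 : Tendsto g atTop (𝓝 0) :=
      squeeze_zero (fun n => (hgpos n).le) hupper hup0
    have hg0' : Tendsto g atTop (𝓝[≠] 0) := by
      refine tendsto_nhdsWithin_iff.mpr ⟨hg0, Eventually.of_forall fun n => ?_⟩
      exact (hgpos n).ne'
    have hlogbot : Tendsto (fun n => Real.log (g n)) atTop atBot :=
      Real.tendsto_log_nhdsNE_zero.comp hg0'
    have hnegtop : Tendsto (fun n => -Real.log (g n)) atTop atTop :=
      tendsto_neg_atTop_iff.mpr hlogbot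
    have hJlow : ∀ n, (-Real.log (g n)) / (K:ℝ) ≤ Jfun S τ (z (φ n)) := by
      intro n
      rw [Jfun_sum]
      rw [div_le_div_iff_of_pos_right hKpos]
      have hterm : -Real.log (g n) ≤ g n - Real.log (g n) := by
        have := hgpos n
        linarith
      refine hterm.trans ?_
      have : g n - Real.log (g n)
          = τ * z (φ n) q' / Sᵀ.mulVec (z (φ n)) q'
            - Real.log (τ * z (φ n) q' / Sᵀ.mulVec (z (φ n)) q') := rfl
      rw [this]
      refine Finset.single_le_sum (f := fun l => τ * z (φ n) l / Sᵀ.mulVec (z (φ n)) l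
        - Real.log (τ * z (φ n) l / Sᵀ.mulVec (z (φ n)) l)) (fun l _ => ?_) (Finset.mem_univ q')
      have h1 : 0 < τ * z (φ n) l / Sᵀ.mulVec (z (φ n)) l :=
        div_pos (mul_pos hτ0 (hz (φ n) l)) (mulVecT_pos hS hcol (hz (φ n)) l)
      linarith [term_ge_one h1]
    have hdiv : Tendsto (fun n => (-Real.log (g n)) / (K:ℝ)) atTop atTop :=
      hnegtop.atTop_div_const hKpos
    have hInfty : Tendsto (fun n => Jfun S τ (z (φ n))) atTop atTop :=
      tendsto_atTop_mono hJlow hdiv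
    have hJφ : Tendsto (fun n => Jfun S τ (z (φ n))) atTop (𝓝 m') :=
      hJ.comp (hφ.tendsto_atTop)
    exact not_tendsto_nhds_of_tendsto_atTop hInfty m' hJφ
  -- J converges to J y
  have hbylim : ∀ i, Tendsto (fun n => Sᵀ.mulVec (z (φ n)) i) atTop (𝓝 (Sᵀ.mulVec y i)) := by
    intro i
    have h1 : ∀ n, Sᵀ.mulVec (z (φ n)) i = ∑ l, Sᵀ i l * z (φ n) l := fun n =>
      mulVec_apply' _ i
    have h2 : Sᵀ.mulVec y i = ∑ l, Sᵀ i l * y l := mulVec_apply' _ i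
    simp only [h1, h2]
    exact tendsto_finset_sum _ fun l _ => (hcoord l).const_mul _
  have hby : ∀ i, 0 < Sᵀ.mulVec y i := mulVecT_pos hS hcol hypos
  have htlim : ∀ i, Tendsto (fun n => τ * z (φ n) i / Sᵀ.mulVec (z (φ n)) i) atTop
      (𝓝 (τ * y i / Sᵀ.mulVec y i)) := by
    intro i
    exact ((hcoord i).const_mul τ).div (hbylim i) (hby i).ne'
  have htpos : ∀ i, 0 < τ * y i / Sᵀ.mulVec y i := fun i =>
    div_pos (mul_pos hτ0 (hypos i)) (hby i)
  have hJlim : Tendsto (fun n => Jfun S τ (z (φ n))) atTop (𝓝 (Jfun S τ y)) := by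
    simp only [Jfun_sum]
    refine Tendsto.div_const ?_ _
    refine tendsto_finset_sum _ fun i _ => ?_
    refine (htlim i).sub ?_
    exact ((Real.continuousAt_log (htpos i).ne').tendsto).comp (htlim i)
  have hJy : Jfun S τ y = m' :=
    tendsto_nhds_unique hJlim (hJ.comp (hφ.tendsto_atTop))
  exact ⟨y, φ, hφ, hconv, hypos, hJy, havgy⟩


/-- Variational problem for `v`. Let `S` be irreducible nonnegative,
`0 < τ < ρ(S)` (with `ρ(S)` the Perron–Frobenius eigenvalue, here characterized by a positive
eigenvector `s` of `Sᵗ`), and let `(v, w)` be an entrywise positive solution of the Dyson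
equation with `⟨v⟩ = ⟨w⟩`; assume every positive solution at the same `τ` equals
`(α v, α⁻¹ w)` for some `α > 0`. Then `v ∈ D_τ`, `J(v) = inf_{D_τ} J`, and every minimizing
sequence in `D_τ` with averages `⟨x⁽ⁿ⁾⟩ = ⟨v⟩` converges to `v`. -/
theorem stmt_5 (K : ℕ) (hK : 1 ≤ K) (S : Matrix (Fin K) (Fin K) ℝ)
    (hS : ∀ i j, 0 ≤ S i j)
    (hirr : ∀ i j, ∃ m : ℕ, 1 ≤ m ∧ 0 < (S ^ m) i j)
    (ρ : ℝ) (s : Fin K → ℝ) (hs : ∀ i, 0 < s i) (hseig : Sᵀ.mulVec s = ρ • s)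
    (τ : ℝ) (hτ0 : 0 < τ) (hτρ : τ < ρ)
    (v w : Fin K → ℝ) (hvw : DysonSol S τ v w) (havg : avg v = avg w)
    (huniq : ∀ v' w', DysonSol S τ v' w' → ∃ α : ℝ, 0 < α ∧ v' = α • v ∧ w' = α⁻¹ • w) :
    v ∈ Dtau S τ ∧
    Jfun S τ v = sInf (Jfun S τ '' Dtau S τ) ∧
    ∀ x : ℕ → (Fin K → ℝ), (∀ n, x n ∈ Dtau S τ) → (∀ n, avg (x n) = avg v) →
      Tendsto (fun n => Jfun S τ (x n)) atTop (𝓝 (sInf (Jfun S τ '' Dtau S τ))) →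
      Tendsto x atTop (𝓝 v) := by
  classical
  have hcol := col_pos hS hirr
  have hvD : v ∈ Dtau S τ := v_mem_Dtau hvw
  have hv : ∀ i, 0 < v i := hvw.1
  set a := avg v with ha_def
  have ha : 0 < a := avg_pos hK hv
  set P : Set (Fin K → ℝ) := {x | ∀ i, 0 < x i} with hPdef
  have hvP : v ∈ P := hv
  set E := Jfun S τ '' P with hEdef
  have hEne : E.Nonempty := ⟨_, ⟨v, hvP, rfl⟩⟩
  have hEbdd : BddBelow E := by
    refine ⟨1, fun e he => ?_⟩
    obtain ⟨x, hxP, rfl⟩ := he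
    exact Jfun_ge_one hτ0 hK hxP (mulVecT_pos hS hcol hxP)
  set m' := sInf E with hm'def
  -- key: any positive point where J attains the value m' is a multiple of v
  have key : ∀ y : Fin K → ℝ, (∀ i, 0 < y i) → Jfun S τ y = m' →
      ∃ α : ℝ, 0 < α ∧ y = α • v := by
    intro y hy hJy
    have hopen : IsOpen P := by
      have : P = Set.pi Set.univ (fun _ : Fin K => Set.Ioi (0:ℝ)) := by
        ext x
        simp [hPdef, Set.mem_pi]
      rw [this]
      exact isOpen_set_pi Set.finite_univ fun i _ => isOpen_Ioi
    have hmin : IsLocalMin (Jfun S τ) y := by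
      have hnhds : P ∈ 𝓝 y := hopen.mem_nhds hy
      refine Filter.eventually_of_mem hnhds fun x hx => ?_
      rw [hJy]
      exact csInf_le hEbdd ⟨x, hx, rfl⟩
    have hEL := EL_of_localmin hτ0 hK hy (mulVecT_pos hS hcol hy) hmin
    exact crit_scaled hK hS hirr hs hseig hτ0 hτρ huniq hy (mulVecT_pos hS hcol hy) hEL
  -- a minimizing sequence over P, normalized
  obtain ⟨u, _, hu_t, hu_mem⟩ := exists_seq_tendsto_sInf hEne hEbdd
  choose y hyP hyJ using fun n => (Set.mem_image _ _ _).mp (hu_mem n)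
  have hyavg : ∀ n, 0 < avg (y n) := fun n => avg_pos hK (hyP n)
  set z : ℕ → Fin K → ℝ := fun n => (a / avg (y n)) • y n with hzdef
  have hcz : ∀ n, 0 < a / avg (y n) := fun n => div_pos ha (hyavg n)
  have hz : ∀ n i, 0 < z n i := by
    intro n i
    have : z n i = (a / avg (y n)) * y n i := rfl
    rw [this]
    exact mul_pos (hcz n) (hyP n i)
  have hza : ∀ n, avg (z n) = a := by
    intro n
    rw [hzdef]
    simp only
    rw [avg_smul, div_mul_cancel₀ _ (hyavg n).ne']
  have hJz : ∀ n, Jfun S τ (z n) = u n := by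
    intro n
    rw [hzdef]
    simp only
    rw [Jfun_smul (hcz n).ne', hyJ n]
  have hJt : Tendsto (fun n => Jfun S τ (z n)) atTop (𝓝 m') := by
    simp only [hJz]
    exact hu_t
  obtain ⟨xb, φ, hφ, hconv, hxbpos, hJxb, havgxb⟩ :=
    limit_point hτ0 hK hS hirr ha hz hza hJt
  obtain ⟨α, hα, hxv⟩ := key xb hxbpos hJxb
  have hJv : Jfun S τ v = m' := by
    rw [← hJxb, hxv, Jfun_smul hα.ne']
  -- part (ii)
  have hDsub : Jfun S τ '' Dtau S τ ⊆ E := by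
    refine Set.image_mono fun x hx => ?_
    exact hx.1
  have hsInfD : sInf (Jfun S τ '' Dtau S τ) = Jfun S τ v := by
    apply le_antisymm
    · exact csInf_le (hEbdd.mono hDsub) ⟨v, hvD, rfl⟩
    · refine le_csInf ⟨_, ⟨v, hvD, rfl⟩⟩ fun e he => ?_
      rw [hJv]
      exact csInf_le hEbdd (hDsub he)
  refine ⟨hvD, hsInfD.symm, ?_⟩
  -- part (iii)
  intro x hxD hxavg hxJ
  have hxJ' : Tendsto (fun n => Jfun S τ (x n)) atTop (𝓝 m') := by
    rw [hsInfD, hJv] at hxJ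
    exact hxJ
  apply tendsto_of_subseq_tendsto
  intro ns hns
  have h1 : ∀ n i, 0 < (x (ns n)) i := fun n => (hxD (ns n)).1
  have h2 : ∀ n, avg (x (ns n)) = a := fun n => hxavg (ns n)
  have h3 : Tendsto (fun n => Jfun S τ (x (ns n))) atTop (𝓝 m') := hxJ'.comp hns
  obtain ⟨yb, ψ, hψ, hconv2, hpos2, hJ2, havg2⟩ :=
    limit_point hτ0 hK hS hirr ha h1 h2 h3
  obtain ⟨β, hβ, hyv⟩ := key yb hpos2 hJ2
  have hβ1 : β = 1 := by
    rw [hyv, avg_smul] at havg2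
    have h' : β * a = 1 * a := by rw [one_mul]; exact havg2
    exact mul_right_cancel₀ ha.ne' h'
  rw [hβ1, one_smul] at hyv
  refine ⟨ψ, ?_⟩
  rw [← hyv]
  exact hconv2
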